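/- Let a > 0 and q ∈ (0,1) satisfy c := (1/2)(log₂(1+q) + log₂(1−q)) + a(log₂(1+q) − log₂(1−q)) > 0. If ξ ∈ {0,1}^ℕ satisfies limsup_n sₙ(ξ)/n = 1/2 + a, then for the martingale F defined by F(∅)=1, F(x1)=(1+q)F(x), F(x0)=(1−q)F(x), one has limsup_n (log₂ F(ξ↾n))/n = c; in particular F(ξ↾n) ≥ 2^{cn/2} infinitely often. -/

import Mathlib

open MeasureTheory

/-- The basic cylinder `[x]` of infinite binary sequences extending the finite string `x`. -/
def Cyl (x : List Bool) : Set (ℕ → Bool) := {α | ∀ i : Fin x.length, α i = x.get i}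

/-- The open set `[X]` generated by a set of finite strings. -/
def OpenGen (X : Set (List Bool)) : Set (ℕ → Bool) := ⋃ x ∈ X, Cyl x

/-- The length-`n` initial segment of an infinite binary sequence, as a finite string. -/
def seg (ξ : ℕ → Bool) (n : ℕ) : List Bool := (List.range n).map ξ

/-- `μ` is the uniform (fair-coin) measure on Cantor space: every cylinder `[x]`
has measure `2^{-|x|}`. -/
def UniformOn (μ : Measure (ℕ → Bool)) : Prop :=
  ∀ x : List Bool, μ (Cyl x) = (2 : ENNReal)⁻¹ ^ x.length

/-- If `limsup sₙ(ξ)/n = 1/2 + a` with `a > 0`, and `q ∈ (0,1)` is chosen so that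
`c = (1/2)(log₂(1+q)+log₂(1−q)) + a(log₂(1+q)−log₂(1−q)) > 0`, then for the
exponential betting martingale `F`, `limsup (log₂ F(ξ↾n))/n = c`; in particular
`F(ξ↾n) ≥ 2^{cn/2}` infinitely often. -/
theorem stmt18 (a q c : ℝ) (ha : 0 < a) (hq : q ∈ Set.Ioo (0 : ℝ) 1)
    (hc : c = (1 / 2) * (Real.logb 2 (1 + q) + Real.logb 2 (1 - q)) +
      a * (Real.logb 2 (1 + q) - Real.logb 2 (1 - q)))
    (hcpos : 0 < c)
    (ξ : ℕ → Bool)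
    (hlim : Filter.limsup
      (fun n : ℕ => (∑ k ∈ Finset.range n, if ξ k then (1 : ℝ) else 0) / (n : ℝ))
      Filter.atTop = 1 / 2 + a)
    (F : List Bool → ℝ) (hF0 : F [] = 1)
    (hF1 : ∀ x, F (x ++ [true]) = (1 + q) * F x)
    (hF2 : ∀ x, F (x ++ [false]) = (1 - q) * F x) :
    Filter.limsup (fun n : ℕ => Real.logb 2 (F (seg ξ n)) / (n : ℝ)) Filter.atTop = c ∧
      ∀ N : ℕ, ∃ n, N ≤ n ∧ (2 : ℝ) ^ (c * (n : ℝ) / 2) ≤ F (seg ξ n) := by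
  obtain ⟨hq0, hq1⟩ := hq
  set L₁ := Real.logb 2 (1 + q) with hL₁
  set L₂ := Real.logb 2 (1 - q) with hL₂
  have h1q : (1 : ℝ) < 1 + q := by linarith
  have h2q : (0 : ℝ) < 1 - q := by linarith
  have hL₁pos : 0 < L₁ := Real.logb_pos one_lt_two h1q
  have hL₂neg : L₂ < 0 := Real.logb_neg one_lt_two h2q (by linarith)
  have hd : 0 < L₁ - L₂ := by linarith
  set S : ℕ → ℝ := fun n => ∑ k ∈ Finset.range n, if ξ k then (1 : ℝ) else 0 with hS
  -- positivity and log formula for F (seg ξ n)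
  have key : ∀ n : ℕ, 0 < F (seg ξ n) ∧
      Real.logb 2 (F (seg ξ n)) = S n * L₁ + ((n : ℝ) - S n) * L₂ := by
    intro n
    induction n with
    | zero => simp [seg, hF0, hS]
    | succ n ih =>
      obtain ⟨hpos, hlog⟩ := ih
      have hseg : seg ξ (n + 1) = seg ξ n ++ [ξ n] := by
        simp [seg, List.range_succ]
      have hSsucc : S (n + 1) = S n + (if ξ n then (1 : ℝ) else 0) := by
        rw [hS]; exact Finset.sum_range_succ _ n
      cases hb : ξ n with
      | true =>
        rw [hseg, hb, hF1]
        constructor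
        · positivity
        · rw [Real.logb_mul (by positivity) (ne_of_gt hpos), hlog, hSsucc, hb]
          push_cast
          norm_num
          ring
      | false =>
        rw [hseg, hb, hF2]
        constructor
        · positivity
        · rw [Real.logb_mul (by positivity) (ne_of_gt hpos), hlog, hSsucc, hb]
          push_cast
          norm_num
          ring
  set t : ℕ → ℝ := fun n => S n / n with ht
  have hS0 : ∀ n, 0 ≤ S n := fun n =>
    Finset.sum_nonneg fun k _ => by split <;> norm_num
  have hSn : ∀ n, S n ≤ n := by
    intro n
    calc S n ≤ ∑ k ∈ Finset.range n, (1 : ℝ) :=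
          Finset.sum_le_sum fun k _ => by split <;> norm_num
      _ = n := by simp
  have ht0 : ∀ n, 0 ≤ t n := fun n => div_nonneg (hS0 n) (Nat.cast_nonneg n)
  have ht1 : ∀ n, t n ≤ 1 := by
    intro n
    rcases Nat.eq_zero_or_pos n with h | h
    · simp [ht, h]
    · exact (div_le_one (by exact_mod_cast h)).2 (hSn n)
  have hbdd : Filter.IsBoundedUnder (· ≤ ·) Filter.atTop t :=
    Filter.isBoundedUnder_of ⟨1, ht1⟩
  have hcobdd : Filter.IsCoboundedUnder (· ≤ ·) Filter.atTop t :=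
    Filter.isCoboundedUnder_le_of_eventually_le Filter.atTop (Filter.Eventually.of_forall ht0)
  -- the affine map
  set g : ℝ → ℝ := fun x => L₂ + (L₁ - L₂) * x with hg
  have hgmono : Monotone g := fun x y hxy => by
    simp only [hg]
    nlinarith
  have hgc : g (1 / 2 + a) = c := by rw [hg, hc]; ring
  have hmap := hgmono.map_limsup_of_continuousAt (F := Filter.atTop) t
    (by fun_prop) hbdd hcobdd
  have heq : ∀ᶠ n : ℕ in Filter.atTop,
      (g ∘ t) n = Real.logb 2 (F (seg ξ n)) / (n : ℝ) := by
    filter_upwards [Filter.eventually_ge_atTop 1] with n hn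
    have hn0 : (0 : ℝ) < n := by exact_mod_cast hn
    rw [(key n).2]
    simp only [Function.comp_apply, hg, ht]
    rw [eq_div_iff hn0.ne']
    have hh : S n / (n : ℝ) * n = S n := div_mul_cancel₀ _ hn0.ne'
    linear_combination (L₁ - L₂) * hh
  have hlimsup : Filter.limsup (fun n : ℕ => Real.logb 2 (F (seg ξ n)) / (n : ℝ))
      Filter.atTop = c := by
    rw [← Filter.limsup_congr heq, ← hmap, hlim, hgc]
  refine ⟨hlimsup, fun N => ?_⟩
  -- coboundedness of the log-ratio function
  have hlow : ∀ n : ℕ, min L₂ 0 ≤ Real.logb 2 (F (seg ξ n)) / (n : ℝ) := by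
    intro n
    rcases Nat.eq_zero_or_pos n with h | h
    · simp [h, min_le_iff]
    · have hn0 : (0 : ℝ) < n := by exact_mod_cast h
      have : L₂ ≤ Real.logb 2 (F (seg ξ n)) / (n : ℝ) := by
        rw [(key n).2, le_div_iff₀ hn0]
        have h1 : 0 ≤ S n * (L₁ - L₂) := mul_nonneg (hS0 n) hd.le
        nlinarith
      exact le_trans (min_le_left _ _) this
  have hcob : Filter.IsCoboundedUnder (· ≤ ·) Filter.atTop
      (fun n : ℕ => Real.logb 2 (F (seg ξ n)) / (n : ℝ)) :=
    Filter.isCoboundedUnder_le_of_eventually_le Filter.atTop (Filter.Eventually.of_forall hlow)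
  have hfreq : ∃ᶠ n : ℕ in Filter.atTop,
      c / 2 < Real.logb 2 (F (seg ξ n)) / (n : ℝ) :=
    Filter.frequently_lt_of_lt_limsup hcob (by rw [hlimsup]; linarith)
  obtain ⟨n, hnN, hn⟩ := (hfreq.and_eventually (Filter.eventually_ge_atTop (max N 1))).exists
  refine ⟨n, le_trans (le_max_left _ _) hn, ?_⟩
  have hn1 : (1 : ℕ) ≤ n := le_trans (le_max_right _ _) hn
  have hn0 : (0 : ℝ) < n := by exact_mod_cast hn1
  have hlogge : c * n / 2 ≤ Real.logb 2 (F (seg ξ n)) := by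
    rw [lt_div_iff₀ hn0] at hnN
    nlinarith
  calc (2 : ℝ) ^ (c * (n : ℝ) / 2) ≤ (2 : ℝ) ^ Real.logb 2 (F (seg ξ n)) :=
        Real.rpow_le_rpow_of_exponent_le one_le_two hlogge
    _ = F (seg ξ n) := Real.rpow_logb two_pos (by norm_num) (key n).1
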